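/- Let G be a finite simple graph and (H, f) a valued cover of G. If (H, f) is a minimal non-strictly-f-degenerate pair, then G is connected and f(v,1) + f(v,2) + ⋯ + f(v,κ) ≤ deg_G(v) for every vertex v ∈ V(G). -/

import Mathlib

open SimpleGraph

universe u

/-- `H` is a cover of `G` with `κ` parts: every edge of `H` joins distinct fibres
`X_u`, `X_v` with `uv ∈ E(G)` (in particular each fibre is independent), and the
edges between two fibres form a (possibly empty) matching. -/
def IsCover {V : Type u} (κ : ℕ) (G : SimpleGraph V) (H : SimpleGraph (V × Fin κ)) : Prop :=
  (∀ (u v : V) (p q : Fin κ), H.Adj (u, p) (v, q) → G.Adj u v) ∧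
  (∀ (u v : V) (p q q' : Fin κ), H.Adj (u, p) (v, q) → H.Adj (u, p) (v, q') → q = q')

/-- The subgraph of `Γ` induced on `R` is strictly `f`-degenerate: every nonempty
subgraph with vertices inside `R` has a vertex whose degree there is `< f`. -/
def StrictlyFDegenerateOn {α : Type u} (Γ : SimpleGraph α) (f : α → ℕ) (R : Set α) : Prop :=
  ∀ S : Set α, S ⊆ R → S.Nonempty → ∃ x ∈ S, (S ∩ {y | Γ.Adj x y}).ncard < f x

/-- `R` is a transversal of a cover with fibres `X_v = {v} × Fin κ`. -/
def IsTransversal {V : Type u} {κ : ℕ} (R : Set (V × Fin κ)) : Prop :=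
  ∀ v : V, ∃! p : Fin κ, (v, p) ∈ R

/-- `H` has a strictly `f`-degenerate transversal. -/
def HasSFDTransversal {V : Type u} {κ : ℕ} (H : SimpleGraph (V × Fin κ))
    (f : V × Fin κ → ℕ) : Prop :=
  ∃ R : Set (V × Fin κ), IsTransversal R ∧ StrictlyFDegenerateOn H f R

/-- `(H, f)` is a minimal non-strictly-`f`-degenerate pair: `H` has no strictly
`f`-degenerate transversal, but for each `v` the cover `H − X_v` of `G − v`
has one. -/
def MinimalNonSFD {V : Type u} (κ : ℕ) (H : SimpleGraph (V × Fin κ))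
    (f : V × Fin κ → ℕ) : Prop :=
  ¬ HasSFDTransversal H f ∧
  ∀ v : V, ∃ R : Set (V × Fin κ), (∀ x ∈ R, x.1 ≠ v) ∧
    (∀ u : V, u ≠ v → ∃! p : Fin κ, (u, p) ∈ R) ∧ StrictlyFDegenerateOn H f R

/-- If `(H, f)` is a minimal non-strictly-`f`-degenerate pair,
then `G` is connected and `∑ q f(v,q) ≤ deg_G v` for every vertex `v`. -/
theorem minimalNonSFD_connected_and_sum_le_degree
    {V : Type} [Fintype V] (G : SimpleGraph V) (κ : ℕ)
    (H : SimpleGraph (V × Fin κ)) (hH : IsCover κ G H) (f : V × Fin κ → ℕ)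
    (hmin : MinimalNonSFD κ H f) :
    G.Connected ∧ ∀ v : V, ∑ q : Fin κ, f (v, q) ≤ (G.neighborSet v).ncard := by

  classical
  obtain ⟨hnot, hdel⟩ := hmin
  have hne : Nonempty V := by
    by_contra h
    rw [not_nonempty_iff] at h
    exact hnot ⟨∅, fun v => isEmptyElim v,
      fun S hS hSne => absurd (Set.subset_empty_iff.mp hS) hSne.ne_empty⟩
  have hdeg : ∀ v : V, ∑ q : Fin κ, f (v, q) ≤ (G.neighborSet v).ncard := by
    intro v
    obtain ⟨R, hR1, hR2, hR3⟩ := hdel v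
    set A : Fin κ → Set (V × Fin κ) := fun q => R ∩ {y | H.Adj (v, q) y} with hA
    have hsum : ∑ q : Fin κ, (A q).ncard ≤ (G.neighborSet v).ncard := by
      have h1 : ∀ q, (A q).ncard = ((A q).toFinite.toFinset).card :=
        fun q => Set.ncard_eq_toFinset_card _ _
      have h2 : (G.neighborSet v).ncard = ((G.neighborSet v).toFinite.toFinset).card :=
        Set.ncard_eq_toFinset_card _ _
      simp only [h1, h2]
      rw [← Finset.card_sigma]
      apply Finset.card_le_card_of_injOn (fun qx => qx.2.1)
      · rintro ⟨q, x⟩ hqx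
        simp only [Finset.mem_coe, Finset.mem_sigma, Finset.mem_univ, Set.Finite.mem_toFinset, true_and] at hqx ⊢
        exact hH.1 v x.1 q x.2 hqx.2
      · rintro ⟨q, x⟩ hqx ⟨q', x'⟩ hqx' hxx
        simp only [Finset.coe_sigma, Set.mem_sigma_iff, Finset.coe_univ, Set.mem_univ,
          Set.Finite.coe_toFinset, true_and, Finset.mem_coe, Finset.mem_sigma,
          Finset.mem_univ, Set.Finite.mem_toFinset] at hqx hqx'
        have hxm : x ∈ R ∧ H.Adj (v, q) x := hqx
        have hxm' : x' ∈ R ∧ H.Adj (v, q') x' := hqx'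
        have hxx1 : x.1 = x'.1 := hxx
        have hxv : x.1 ≠ v := hR1 x hxm.1
        obtain ⟨p, hp, hpu⟩ := hR2 x.1 hxv
        have e1 : x.2 = p := hpu x.2 hxm.1
        have e2 : x'.2 = p := hpu x'.2 (by rw [hxx1]; exact hxm'.1)
        have hx : x = x' := Prod.ext hxx1 (e1.trans e2.symm)
        subst hx
        have hq : q = q' := hH.2 x.1 v x.2 q q' hxm.2.symm hxm'.2.symm
        subst hq
        rfl
    by_contra hcon
    push_neg at hcon
    have hlt : ∑ q : Fin κ, (A q).ncard < ∑ q : Fin κ, f (v, q) := lt_of_le_of_lt hsum hcon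
    obtain ⟨q, -, hq⟩ := Finset.exists_lt_of_sum_lt hlt
    apply hnot
    refine ⟨insert (v, q) R, ?_, ?_⟩
    · intro u
      by_cases hu : u = v
      · subst hu
        refine ⟨q, Set.mem_insert _ _, ?_⟩
        intro p hp
        rcases Set.mem_insert_iff.mp hp with hp | hp
        · exact (Prod.ext_iff.mp hp).2
        · exact absurd rfl (hR1 _ hp)
      · obtain ⟨p, hp, hpu⟩ := hR2 u hu
        refine ⟨p, Set.mem_insert_of_mem _ hp, ?_⟩
        intro p' hp'
        rcases Set.mem_insert_iff.mp hp' with h | h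
        · exact absurd (Prod.ext_iff.mp h).1 hu
        · exact hpu p' h
    · intro S hS hSne
      by_cases hvq : (v, q) ∈ S
      · refine ⟨(v, q), hvq, ?_⟩
        have hsub : S ∩ {y | H.Adj (v, q) y} ⊆ A q := by
          rintro y ⟨hyS, hyadj⟩
          rcases Set.mem_insert_iff.mp (hS hyS) with hy | hy
          · subst hy
            exact absurd hyadj (H.irrefl)
          · exact ⟨hy, hyadj⟩
        exact lt_of_le_of_lt (Set.ncard_le_ncard hsub (A q).toFinite) hq
      · refine hR3 S (fun y hy => ?_) hSne
        rcases Set.mem_insert_iff.mp (hS hy) with h | h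
        · exact absurd (h ▸ hy) hvq
        · exact h
  have hpre : G.Preconnected := by
    intro a b
    by_contra hab
    set C : Set V := {u | G.Reachable a u} with hC
    have haC : a ∈ C := Reachable.refl a
    have hbC : b ∉ C := hab
    obtain ⟨Rb, hRb1, hRb2, hRb3⟩ := hdel b
    obtain ⟨Ra, hRa1, hRa2, hRa3⟩ := hdel a
    apply hnot
    refine ⟨{x | x ∈ Rb ∧ x.1 ∈ C} ∪ {x | x ∈ Ra ∧ x.1 ∉ C}, ?_, ?_⟩
    · intro u
      by_cases hu : u ∈ C
      · have hub : u ≠ b := fun h => hbC (h ▸ hu)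
        obtain ⟨p, hp, hpu⟩ := hRb2 u hub
        refine ⟨p, Or.inl ⟨hp, hu⟩, ?_⟩
        rintro p' (h | h)
        · exact hpu p' h.1
        · exact absurd hu h.2
      · have hua : u ≠ a := fun h => hu (h ▸ haC)
        obtain ⟨p, hp, hpu⟩ := hRa2 u hua
        refine ⟨p, Or.inr ⟨hp, hu⟩, ?_⟩
        rintro p' (h | h)
        · exact absurd h.2 hu
        · exact hpu p' h.1
    · intro S hSR hSne
      by_cases h1 : ({x ∈ S | x.1 ∈ C} : Set (V × Fin κ)).Nonempty
      · obtain ⟨x, hxS, hxlt⟩ := hRb3 {x ∈ S | x.1 ∈ C} (fun y hy => by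
          rcases hSR hy.1 with h | h
          · exact h.1
          · exact absurd hy.2 h.2) h1
        refine ⟨x, hxS.1, ?_⟩
        have heq : S ∩ {y | H.Adj x y} = {x ∈ S | x.1 ∈ C} ∩ {y | H.Adj x y} := by
          apply Set.Subset.antisymm
          · rintro y ⟨hyS, hyadj⟩
            have hadj : G.Adj x.1 y.1 := hH.1 x.1 y.1 x.2 y.2 hyadj
            exact ⟨⟨hyS, hxS.2.trans hadj.reachable⟩, hyadj⟩
          · rintro y ⟨⟨hyS, -⟩, hyadj⟩
            exact ⟨hyS, hyadj⟩
        rw [heq]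
        exact hxlt
      · refine hRa3 S (fun y hy => ?_) hSne
        rcases hSR hy with h | h
        · exact absurd (⟨y, hy, h.2⟩ : ({x ∈ S | x.1 ∈ C} : Set (V × Fin κ)).Nonempty) h1
        · exact h.1
  exact ⟨(connected_iff (G := G)).mpr ⟨hpre, hne⟩, hdeg⟩
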